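/- Let Ω ⊆ ℝ^N be measurable, u ∈ 𝓜(Ω), and (u_n) ⊂ 𝓜(Ω) a sequence with ‖u_n − u‖_{𝓛(Ω)} → 0 as n → ∞. Then for every α > 0, lim_{n→∞} ∫_Ω ( e^{α (u_n − u)²} − 1 ) dx = 0. -/

import Mathlib

open MeasureTheory Filter

open Real ENNReal


-- convexity bound
lemma exp_conv (t x : ℝ) (ht : 0 ≤ t) (ht1 : t ≤ 1) (hx : 0 ≤ x) :
    Real.exp (t * x) - 1 ≤ t * (Real.exp x - 1) := by
  have h := convexOn_exp.2 (Set.mem_univ x) (Set.mem_univ 0) ht (show (0:ℝ) ≤ 1 - t by linarith) (show t + (1 - t) = 1 by ring)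
  simp [Real.exp_zero, smul_eq_mul] at h
  linarith

-- elementary inequality
lemma elem (a b : ℝ) :
    Real.exp (((a - b) / 2) ^ 2) - 1 ≤ (Real.exp (a ^ 2) - 1) + (Real.exp (b ^ 2) - 1) := by
  have h1 : ((a - b) / 2) ^ 2 ≤ (a ^ 2 + b ^ 2) / 2 := by nlinarith [sq_nonneg (a + b)]
  have h2 : Real.exp (((a - b) / 2) ^ 2) ≤ Real.exp ((a ^ 2 + b ^ 2) / 2) := Real.exp_le_exp.2 h1
  have h3 : Real.exp ((a ^ 2 + b ^ 2) / 2) = Real.exp (a ^ 2 / 2) * Real.exp (b ^ 2 / 2) := by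
    rw [← Real.exp_add]; ring_nf
  have h5 : Real.exp (a ^ 2 / 2) * Real.exp (a ^ 2 / 2) = Real.exp (a ^ 2) := by
    rw [← Real.exp_add]; ring_nf
  have h5' : Real.exp (b ^ 2 / 2) * Real.exp (b ^ 2 / 2) = Real.exp (b ^ 2) := by
    rw [← Real.exp_add]; ring_nf
  have h6 : 1 ≤ Real.exp (a ^ 2) := Real.one_le_exp (sq_nonneg a)
  have h6' : 1 ≤ Real.exp (b ^ 2) := Real.one_le_exp (sq_nonneg b)
  nlinarith [sq_nonneg (Real.exp (a ^ 2 / 2) - Real.exp (b ^ 2 / 2))]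

lemma exists_K {X : Type*} [MeasurableSpace X] (μ : Measure X) (w : X → ℝ)
    (hw : Measurable w)
    (hfin : ∀ k : ℝ, 0 < k →
      ∫⁻ x, ENNReal.ofReal (Real.exp ((w x / k) ^ 2) - 1) ∂μ < ⊤) :
    ∃ K : ℝ, 0 < K ∧
      ∫⁻ x, ENNReal.ofReal (Real.exp ((w x / K) ^ 2) - 1) ∂μ ≤ 1 := by
  set F : ℕ → X → ℝ≥0∞ := fun n x =>
    ENNReal.ofReal (Real.exp ((w x / ((n : ℝ) + 1)) ^ 2) - 1) with hF_def
  have hF : ∀ n, Measurable (F n) := by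
    intro n
    exact ENNReal.measurable_ofReal.comp
      ((Real.measurable_exp.comp ((hw.div_const _).pow_const 2)).sub measurable_const)
  have hbound : ∀ n, F n ≤ᵐ[μ] F 0 := by
    intro n
    refine Filter.Eventually.of_forall fun x => ?_
    apply ENNReal.ofReal_le_ofReal
    have h1 : (w x / ((n : ℝ) + 1)) ^ 2 ≤ (w x / (((0:ℕ) : ℝ) + 1)) ^ 2 := by
      push_cast
      rw [div_pow, div_pow]
      have h2 : (1 : ℝ) ≤ ((n : ℝ) + 1) ^ 2 := by nlinarith [Nat.cast_nonneg (α := ℝ) n]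
      calc (w x) ^ 2 / ((n : ℝ) + 1) ^ 2 ≤ (w x) ^ 2 := div_le_self (sq_nonneg _) h2
        _ = (w x) ^ 2 / ((0 : ℝ) + 1) ^ 2 := by norm_num
    simp only [sub_le_sub_iff_right]
    exact Real.exp_le_exp.2 h1
  have hfin0 : ∫⁻ x, F 0 x ∂μ ≠ ⊤ := by
    have := hfin 1 one_pos
    simp only [hF_def, Nat.cast_zero, zero_add]
    exact this.ne
  have hlim : ∀ᵐ x ∂μ, Tendsto (fun n => F n x) atTop (nhds 0) := by
    refine Filter.Eventually.of_forall fun x => ?_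
    have h1 : Tendsto (fun n : ℕ => w x / ((n : ℝ) + 1)) atTop (nhds 0) := by
      apply Tendsto.div_atTop tendsto_const_nhds
      exact tendsto_atTop_add_const_right _ 1 tendsto_natCast_atTop_atTop
    have h2 : Tendsto (fun n : ℕ => (w x / ((n : ℝ) + 1)) ^ 2) atTop (nhds 0) := by
      simpa using h1.pow 2
    have h3 : Tendsto (fun n : ℕ => Real.exp ((w x / ((n : ℝ) + 1)) ^ 2) - 1) atTop (nhds 0) := by
      have := (Real.continuous_exp.tendsto 0).comp h2
      simpa using this.sub_const 1
    have h4 := (ENNReal.continuous_ofReal.tendsto 0).comp h3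
    simpa [hF_def, Function.comp_def] using h4
  have hmain : Tendsto (fun n => ∫⁻ x, F n x ∂μ) atTop (nhds 0) := by
    have := tendsto_lintegral_of_dominated_convergence (F 0) hF hbound hfin0 hlim
    simpa using this
  have h1 : ∀ᶠ n in atTop, ∫⁻ x, F n x ∂μ ≤ 1 :=
    hmain.eventually_le_const (by norm_num : (0:ℝ≥0∞) < 1)
  obtain ⟨n, hn⟩ := h1.exists
  exact ⟨(n : ℝ) + 1, by positivity, hn⟩

/-- The Luxemburg norm ‖u‖_{𝓛} := inf{ k > 0 : ∫ (e^{(u/k)²} − 1) dμ ≤ 1 }. -/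
noncomputable def luxNorm {α : Type*} [MeasurableSpace α] (μ : Measure α) (u : α → ℝ) : ℝ :=
  sInf {k : ℝ | 0 < k ∧ ∫⁻ x, ENNReal.ofReal (Real.exp ((u x / k) ^ 2) - 1) ∂μ ≤ 1}

/-- Let Ω ⊆ ℝ^N be measurable, u ∈ 𝓜(Ω), and (u_n) ⊂ 𝓜(Ω) with ‖u_n − u‖_{𝓛(Ω)} → 0.
Then for every α > 0, ∫_Ω (e^{α (u_n − u)²} − 1) dx → 0. -/
theorem stmt_2 {N : ℕ} (Ω : Set (EuclideanSpace ℝ (Fin N))) (hΩ : MeasurableSet Ω)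
    (u : EuclideanSpace ℝ (Fin N) → ℝ) (un : ℕ → EuclideanSpace ℝ (Fin N) → ℝ)
    (hu : Measurable u) (hun : ∀ n, Measurable (un n))
    (huM : ∀ k : ℝ, 0 < k →
      ∫⁻ x in Ω, ENNReal.ofReal (Real.exp ((u x / k) ^ 2) - 1) < ⊤)
    (hunM : ∀ n, ∀ k : ℝ, 0 < k →
      ∫⁻ x in Ω, ENNReal.ofReal (Real.exp ((un n x / k) ^ 2) - 1) < ⊤)
    (hlux : Tendsto (fun n => luxNorm (volume.restrict Ω) (fun x => un n x - u x))
      atTop (nhds 0)) :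
    ∀ α : ℝ, 0 < α →
      Tendsto (fun n => ∫⁻ x in Ω,
          ENNReal.ofReal (Real.exp (α * (un n x - u x) ^ 2) - 1))
        atTop (nhds 0) := by
  intro α hα
  -- finiteness for differences
  have hwfin : ∀ n, ∀ k : ℝ, 0 < k →
      ∫⁻ x in Ω, ENNReal.ofReal (Real.exp (((un n x - u x) / k) ^ 2) - 1) < ⊤ := by
    intro n k hk
    have hle : ∫⁻ x in Ω, ENNReal.ofReal (Real.exp (((un n x - u x) / k) ^ 2) - 1) ≤
        ∫⁻ x in Ω, (ENNReal.ofReal (Real.exp ((un n x / (k/2)) ^ 2) - 1) +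
          ENNReal.ofReal (Real.exp ((u x / (k/2)) ^ 2) - 1)) := by
      apply lintegral_mono
      intro x
      refine le_trans (le_trans (ENNReal.ofReal_le_ofReal ?_) ENNReal.ofReal_add_le) le_rfl
      have hrw : (un n x - u x) / k = (un n x / (k/2) - u x / (k/2)) / 2 := by
        field_simp
      rw [hrw]
      exact elem _ _
    have heq : ∫⁻ x in Ω, (ENNReal.ofReal (Real.exp ((un n x / (k/2)) ^ 2) - 1) +
          ENNReal.ofReal (Real.exp ((u x / (k/2)) ^ 2) - 1)) =
        (∫⁻ x in Ω, ENNReal.ofReal (Real.exp ((un n x / (k/2)) ^ 2) - 1)) +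
        ∫⁻ x in Ω, ENNReal.ofReal (Real.exp ((u x / (k/2)) ^ 2) - 1) := by
      apply lintegral_add_left
      exact ENNReal.measurable_ofReal.comp
        ((Real.measurable_exp.comp (((hun n).div_const _).pow_const 2)).sub measurable_const)
    calc _ ≤ _ := hle
      _ = _ := heq
      _ < ⊤ := ENNReal.add_lt_top.2 ⟨hunM n _ (by linarith), huM _ (by linarith)⟩
  rw [ENNReal.tendsto_nhds_zero]
  intro ε hε
  set ε' := min ε 1 with hε'_def
  have hε'pos : 0 < ε' := lt_min hε one_pos
  have hε'ne : ε' ≠ ⊤ := ne_top_of_le_ne_top one_ne_top (min_le_right _ _)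
  have hε'top : 0 < ε'.toReal := ENNReal.toReal_pos hε'pos.ne' hε'ne
  set δ := Real.sqrt (ε'.toReal / α) with hδ_def
  have hδpos : 0 < δ := Real.sqrt_pos.2 (by positivity)
  have hδsq : α * δ ^ 2 = ε'.toReal := by
    rw [hδ_def, Real.sq_sqrt (by positivity)]
    field_simp
  have hev : ∀ᶠ n in atTop,
      luxNorm (volume.restrict Ω) (fun x => un n x - u x) < δ :=
    hlux.eventually (gt_mem_nhds hδpos)
  filter_upwards [hev] with n hn
  -- the admissible set is nonempty
  obtain ⟨K, hK0, hK1⟩ := exists_K (volume.restrict Ω) (fun x => un n x - u x)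
    ((hun n).sub hu) (fun k hk => hwfin n k hk)
  have hSne : {k : ℝ | 0 < k ∧
      ∫⁻ x, ENNReal.ofReal (Real.exp (((un n x - u x) / k) ^ 2) - 1)
        ∂(volume.restrict Ω) ≤ 1}.Nonempty := ⟨K, hK0, hK1⟩
  obtain ⟨k, hkmem, hkδ⟩ := exists_lt_of_csInf_lt hSne hn
  obtain ⟨hk0, hkint⟩ := hkmem
  -- main estimate
  have htle : α * k ^ 2 ≤ ε'.toReal := by
    rw [← hδsq]
    have : k ^ 2 ≤ δ ^ 2 := by nlinarith
    nlinarith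
  have ht1 : α * k ^ 2 ≤ 1 := le_trans htle (by
    have := ENNReal.toReal_mono one_ne_top (min_le_right ε 1)
    simpa using this)
  have ht0 : 0 ≤ α * k ^ 2 := by positivity
  calc ∫⁻ x in Ω, ENNReal.ofReal (Real.exp (α * (un n x - u x) ^ 2) - 1)
      ≤ ∫⁻ x in Ω, ENNReal.ofReal (α * k ^ 2) *
          ENNReal.ofReal (Real.exp (((un n x - u x) / k) ^ 2) - 1) := by
        apply lintegral_mono
        intro x
        dsimp only
        rw [← ENNReal.ofReal_mul ht0]
        apply ENNReal.ofReal_le_ofReal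
        have hrw : α * (un n x - u x) ^ 2 = (α * k ^ 2) * (((un n x - u x) / k) ^ 2) := by
          field_simp
        rw [hrw]
        exact exp_conv _ _ ht0 ht1 (sq_nonneg _)
    _ = ENNReal.ofReal (α * k ^ 2) *
          ∫⁻ x in Ω, ENNReal.ofReal (Real.exp (((un n x - u x) / k) ^ 2) - 1) :=
        lintegral_const_mul' _ _ ENNReal.ofReal_ne_top
    _ ≤ ENNReal.ofReal (α * k ^ 2) * 1 := by
        exact mul_le_mul_right hkint _
    _ = ENNReal.ofReal (α * k ^ 2) := mul_one _
    _ ≤ ENNReal.ofReal ε'.toReal := ENNReal.ofReal_le_ofReal htle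
    _ = ε' := ENNReal.ofReal_toReal hε'ne
    _ ≤ ε := min_le_left _ _
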